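/- For every s ∈ ℝ and every w ∈ ℝ with w ≠ s, the function g_s is differentiable at w with derivative g_s'(w) = w·g_s(w) + 𝟙(w ≤ s) − Φ(s); in particular g_s solves Stein's equation g_s'(w) − w·g_s(w) = 𝟙(w ∈ (−∞, s]) − Φ(s) at every w ≠ s. -/

import Mathlib

open MeasureTheory

noncomputable def Phi (s : ℝ) : ℝ :=
  ((ProbabilityTheory.gaussianReal 0 1) (Set.Iic s)).toReal

noncomputable def steinG (s w : ℝ) : ℝ :=
  Real.exp (w ^ 2 / 2) *
    ∫ u in Set.Iic w, ((if u ≤ s then (1 : ℝ) else 0) - Phi s) * Real.exp (-u ^ 2 / 2)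

/-- At every `w ≠ s`, the Stein solution `g_s` is differentiable with derivative
`w * g_s w + 𝟙(w ≤ s) - Φ s`; in particular it solves Stein's equation there. -/
theorem steinG_hasDerivAt (s w : ℝ) (hw : w ≠ s) :
    HasDerivAt (steinG s) (w * steinG s w + (if w ≤ s then (1 : ℝ) else 0) - Phi s) w := by
  set c := Phi s with hc
  have hc0 : 0 ≤ c := ENNReal.toReal_nonneg
  have hc1 : c ≤ 1 := by
    have h := prob_le_one (μ := ProbabilityTheory.gaussianReal 0 1) (s := Set.Iic s)
    simpa [hc, Phi] using ENNReal.toReal_mono ENNReal.one_ne_top h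
  set f : ℝ → ℝ := fun u => ((if u ≤ s then (1 : ℝ) else 0) - c) * Real.exp (-u ^ 2 / 2)
    with hfdef
  -- integrability of f on ℝ
  have hexp : Integrable (fun u : ℝ => Real.exp (-u ^ 2 / 2)) := by
    have h := integrable_exp_neg_mul_sq (b := (1/2 : ℝ)) (by norm_num)
    have heq : (fun u : ℝ => Real.exp (-u ^ 2 / 2)) = fun u : ℝ => Real.exp (-(1/2) * u ^ 2) := by
      funext u; congr 1; ring
    rw [heq]; exact h
  have hmeasg : Measurable fun u : ℝ => (if u ≤ s then (1 : ℝ) else 0) - c :=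
    (Measurable.ite measurableSet_Iic measurable_const measurable_const).sub measurable_const
  have hmeas : Measurable f := hmeasg.mul (by fun_prop)
  have hbdd : ∀ x : ℝ, ‖(if x ≤ s then (1 : ℝ) else 0) - c‖ ≤ 1 := by
    intro x
    rw [Real.norm_eq_abs, abs_le]
    split <;> constructor <;> linarith
  have hint : Integrable f :=
    hexp.bdd_mul (c := 1) hmeasg.aestronglyMeasurable (Filter.Eventually.of_forall hbdd)
  -- F
  set F : ℝ → ℝ := fun x => ∫ u in Set.Iic x, f u with hF
  have hFx : ∀ x, F x = F w + ∫ u in w..x, f u := by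
    intro x
    have := intervalIntegral.integral_Iic_sub_Iic (hint.integrableOn) (hint.integrableOn)
      (a := w) (b := x) (μ := volume)
    linarith [this]
  -- continuity of f at w
  have hcont : ContinuousAt f w := by
    rcases lt_or_gt_of_ne hw with h | h
    · have hev : f =ᶠ[nhds w] fun u => (1 - c) * Real.exp (-u ^ 2 / 2) := by
        filter_upwards [Iio_mem_nhds h] with u hu
        simp [hfdef, (Set.mem_Iio.mp hu).le]
      exact ContinuousAt.congr (by fun_prop) hev.symm
    · have hev : f =ᶠ[nhds w] fun u => (0 - c) * Real.exp (-u ^ 2 / 2) := by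
        filter_upwards [Ioi_mem_nhds h] with u hu
        simp [hfdef, not_le.mpr (Set.mem_Ioi.mp hu)]
      exact ContinuousAt.congr (by fun_prop) hev.symm
  have key : HasDerivAt (fun x => ∫ u in w..x, f u) (f w) w :=
    intervalIntegral.integral_hasDerivAt_right hint.intervalIntegrable
      (hmeas.stronglyMeasurable.stronglyMeasurableAtFilter) hcont
  have hFd : HasDerivAt F (f w) w := by
    have := (key.const_add (F w))
    refine HasDerivAt.congr_of_eventuallyEq this ?_
    filter_upwards with x using (hFx x)
  -- exp part
  have hexpd : HasDerivAt (fun x : ℝ => Real.exp (x ^ 2 / 2)) (Real.exp (w ^ 2 / 2) * w) w := by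
    have h1 : HasDerivAt (fun x : ℝ => x ^ 2 / 2) w w := by
      simpa using (hasDerivAt_pow 2 w).div_const 2
    simpa using h1.exp
  have hmul := hexpd.fun_mul hFd
  have hGeq : steinG s = fun x => Real.exp (x ^ 2 / 2) * F x := by
    funext x; simp [steinG, hF, hfdef, hc]
  rw [hGeq]
  refine hmul.congr_deriv ?_
  have hfw : Real.exp (w ^ 2 / 2) * f w = (if w ≤ s then (1 : ℝ) else 0) - c := by
    rw [hfdef]
    have : Real.exp (w ^ 2 / 2) * Real.exp (-w ^ 2 / 2) = 1 := by
      rw [← Real.exp_add]; ring_nf; exact Real.exp_zero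
    calc Real.exp (w ^ 2 / 2) * (((if w ≤ s then (1:ℝ) else 0) - c) * Real.exp (-w ^ 2 / 2))
        = ((if w ≤ s then (1:ℝ) else 0) - c) *
          (Real.exp (w ^ 2 / 2) * Real.exp (-w ^ 2 / 2)) := by ring
      _ = _ := by rw [this]; ring
  simp only [hfw]
  ring
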